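/- arXiv:1304.2298 — 4 statements merged into one kernel-verified Lean document; each statement's English description precedes it below -/
import Mathlib

section
/- Let A ∈ SO(n−1), a ∈ ℝ^{n-1} with Aa = a and a ≠ 0, and c > 0. Define ũ_i(r) = c·√(‖Aⁱ − I‖² r² + i² ‖a‖²) for r ≥ 0 and i ∈ ℕ, where ‖·‖ on matrices is the operator norm, and B̃(r) = inf_{i∈ℕ} ũ_i(r). Then limsup_{r→∞} B̃(r)/r ≤ c·‖Aⁱ − I‖ for every i ∈ ℕ, and consequently B̃(r) = o(r) as r → ∞ (i.e., B̃(r)/r → 0). -/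
noncomputable section

abbrev E (m : ℕ) := EuclideanSpace ℝ (Fin m)

/-- Operator norm of Aⁱ − I. -/
def opDiff {m : ℕ} (A : E m ≃ₗᵢ[ℝ] E m) (i : ℕ) : ℝ :=
  ‖((A ^ i).toContinuousLinearEquiv : E m →L[ℝ] E m) - 1‖

lemma opDiff_nonneg {m : ℕ} (A : E m ≃ₗᵢ[ℝ] E m) (i : ℕ) : 0 ≤ opDiff A i :=
  norm_nonneg _

lemma exists_opDiff_small {m : ℕ} (hm : 0 < m) (A : E m ≃ₗᵢ[ℝ] E m) {ε : ℝ} (hε : 0 < ε) :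
    ∃ k : ℕ+, opDiff A (k : ℕ) < ε := by
  haveI : Nontrivial (E m) := by
    have : Nonempty (Fin m) := ⟨⟨0, hm⟩⟩
    exact inferInstance
  set T : ℕ → (E m →L[ℝ] E m) := fun i =>
    ((A ^ i).toContinuousLinearEquiv : E m →L[ℝ] E m) with hT
  have hTnorm : ∀ i, ‖T i‖ = 1 := fun i =>
    (A ^ i).toLinearIsometry.norm_toContinuousLinearMap
  have hcomp : ∀ i k, T (i + k) = (T i).comp (T k) := by
    intro i k; ext x; simp [hT, pow_add]
  have hmem : ∀ i, T i ∈ Metric.closedBall (0 : E m →L[ℝ] E m) 1 := by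
    intro i; simp [Metric.mem_closedBall, dist_zero_right, hTnorm i]
  obtain ⟨L, -, φ, hφ, hlim⟩ :=
    (isCompact_closedBall (0 : E m →L[ℝ] E m) 1).tendsto_subseq hmem
  have hcau : CauchySeq (T ∘ φ) := hlim.cauchySeq
  rw [Metric.cauchySeq_iff] at hcau
  obtain ⟨N, hN⟩ := hcau ε hε
  have hlt : φ N < φ (N + 1) := hφ (Nat.lt_succ_self N)
  set k : ℕ := φ (N + 1) - φ N with hk
  have hkpos : 0 < k := Nat.sub_pos_of_lt hlt
  refine ⟨⟨k, hkpos⟩, ?_⟩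
  have hsum : φ N + k = φ (N + 1) := by omega
  have key : ‖T (φ (N+1)) - T (φ N)‖ < ε := by
    have := hN (N + 1) (by omega) N (by omega)
    simpa [dist_eq_norm, Function.comp] using this
  have : T (φ (N+1)) - T (φ N) = (T (φ N)).comp (T k - 1) := by
    rw [ContinuousLinearMap.comp_sub, ← hcomp, hsum]
    congr 1
  rw [this] at key
  have hnc : ‖(T (φ N)).comp (T k - 1)‖ = ‖T k - 1‖ :=
    (A ^ (φ N)).toLinearIsometry.norm_toContinuousLinearMap_comp
  rw [hnc] at key
  exact key

/-- With ũ_i(r) = c√(‖Aⁱ−I‖²r² + i²‖a‖²) and B̃(r) = inf_i ũ_i(r):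
limsup_{r→∞} B̃(r)/r ≤ c‖Aⁱ−I‖ for every i, and consequently B̃(r) = o(r). -/
theorem boundary_function_sublinear {m : ℕ} (A : E m ≃ₗᵢ[ℝ] E m)
    (hdet : LinearMap.det (A.toLinearEquiv : E m →ₗ[ℝ] E m) = 1)
    (a : E m) (hAa : A a = a) (ha : a ≠ 0) (c : ℝ) (hc : 0 < c) :
    (∀ i : ℕ+,
      Filter.limsup
        (fun r : ℝ =>
          (⨅ j : ℕ+, c * Real.sqrt ((opDiff A j) ^ 2 * r ^ 2 + (j : ℝ) ^ 2 * ‖a‖ ^ 2)) / r)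
        Filter.atTop ≤ c * opDiff A i) ∧
    Filter.Tendsto
      (fun r : ℝ =>
        (⨅ j : ℕ+, c * Real.sqrt ((opDiff A j) ^ 2 * r ^ 2 + (j : ℝ) ^ 2 * ‖a‖ ^ 2)) / r)
      Filter.atTop (nhds 0) := by
  have hm : 0 < m := by
    by_contra h
    push_neg at h
    interval_cases m
    exact ha (Subsingleton.elim a 0)
  set u : ℕ+ → ℝ → ℝ := fun j r =>
    c * Real.sqrt ((opDiff A j) ^ 2 * r ^ 2 + (j : ℝ) ^ 2 * ‖a‖ ^ 2) with hu
  set g : ℝ → ℝ := fun r => (⨅ j : ℕ+, u j r) / r with hg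
  have hunn : ∀ (j : ℕ+) (r : ℝ), 0 ≤ u j r := fun j r =>
    mul_nonneg hc.le (Real.sqrt_nonneg _)
  have hbdd : ∀ r : ℝ, BddBelow (Set.range fun j : ℕ+ => u j r) := by
    intro r
    exact ⟨0, by rintro x ⟨j, rfl⟩; exact hunn j r⟩
  -- Claim A
  have claimA : ∀ i : ℕ+,
      Filter.Tendsto (fun r : ℝ => u i r / r) Filter.atTop (nhds (c * opDiff A i)) := by
    intro i
    have h2 : Filter.Tendsto (fun r : ℝ => (opDiff A i) ^ 2 + (i : ℝ) ^ 2 * ‖a‖ ^ 2 / r ^ 2)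
        Filter.atTop (nhds ((opDiff A i) ^ 2 + 0)) := by
      refine tendsto_const_nhds.add ?_
      exact Filter.Tendsto.div_atTop tendsto_const_nhds (Filter.tendsto_pow_atTop (by norm_num : (2:ℕ) ≠ 0))
    have h3 : Filter.Tendsto (fun r : ℝ => c * Real.sqrt ((opDiff A i) ^ 2 + (i : ℝ) ^ 2 * ‖a‖ ^ 2 / r ^ 2))
        Filter.atTop (nhds (c * opDiff A i)) := by
      have := ((Real.continuous_sqrt.tendsto _).comp h2).const_mul c
      simpa [Real.sqrt_sq (opDiff_nonneg A i)] using this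
    refine h3.congr' ?_
    filter_upwards [Filter.eventually_gt_atTop (0:ℝ)] with r hr
    have hX : (0:ℝ) ≤ (opDiff A i) ^ 2 + (i : ℝ) ^ 2 * ‖a‖ ^ 2 / r ^ 2 := by positivity
    have heq : (opDiff A i) ^ 2 * r ^ 2 + (i : ℝ) ^ 2 * ‖a‖ ^ 2
        = ((opDiff A i) ^ 2 + (i : ℝ) ^ 2 * ‖a‖ ^ 2 / r ^ 2) * r ^ 2 := by
      field_simp
    rw [hu]
    simp only
    rw [heq, Real.sqrt_mul hX, Real.sqrt_sq hr.le, ← mul_assoc,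
      mul_div_assoc, mul_div_cancel_right₀ _ hr.ne']
  -- Claim B
  have claimB : ∀ r : ℝ, 0 < r → (0 ≤ g r ∧ ∀ i : ℕ+, g r ≤ u i r / r) := by
    intro r hr
    constructor
    · exact div_nonneg (le_ciInf fun j => hunn j r) hr.le
    · intro i
      exact div_le_div_of_nonneg_right (ciInf_le (hbdd r) i) hr.le
  have part1 : ∀ i : ℕ+, Filter.limsup g Filter.atTop ≤ c * opDiff A i := by
    intro i
    have hle : g ≤ᶠ[Filter.atTop] fun r => u i r / r := by
      filter_upwards [Filter.eventually_gt_atTop (0:ℝ)] with r hr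
      exact (claimB r hr).2 i
    have hco : Filter.IsCoboundedUnder (· ≤ ·) Filter.atTop g := by
      apply Filter.IsBoundedUnder.isCoboundedUnder_le
      refine ⟨0, Filter.eventually_map.2 ?_⟩
      filter_upwards [Filter.eventually_gt_atTop (0:ℝ)] with r hr
      exact (claimB r hr).1
    have hbo : Filter.IsBoundedUnder (· ≤ ·) Filter.atTop (fun r => u i r / r) :=
      (claimA i).isBoundedUnder_le
    calc Filter.limsup g Filter.atTop ≤ Filter.limsup (fun r => u i r / r) Filter.atTop :=
          Filter.limsup_le_limsup hle hco hbo
      _ = c * opDiff A i := (claimA i).limsup_eq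
  refine ⟨part1, ?_⟩
  rw [Metric.tendsto_nhds]
  intro ε hε
  obtain ⟨i, hi⟩ := exists_opDiff_small hm A (div_pos hε hc)
  have hlt : c * opDiff A i < ε := by
    rw [mul_comm]
    exact (lt_div_iff₀ hc).1 hi
  have hev : ∀ᶠ r : ℝ in Filter.atTop, u i r / r < ε :=
    (claimA i).eventually_lt_const hlt
  filter_upwards [hev, Filter.eventually_gt_atTop (0:ℝ)] with r h1 h2
  rw [Real.dist_eq, sub_zero, abs_of_nonneg (claimB r h2).1]
  exact lt_of_le_of_lt ((claimB r h2).2 i) h1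
end
end

section
/- Suppose g, h generate a discrete subgroup of Isom⁺(ℍⁿ), g is parabolic fixing ∞ with h(∞) ≠ ∞, and suppose R_h > B_g(v_h). Let σ be the vertical geodesic segment from the north pole N_h = (v_h, R_h) down to (v_h, B_g(v_h)), lying in T_g. Then h(σ) is the vertical geodesic segment from N_{h^{-1}} = (v_{h^{-1}}, R_h) up to (v_{h^{-1}}, t) with t = R_h²/B_g(v_h), and disjointness h(T_g) ∩ T_g = ∅ forces t ≤ B_g(v_{h^{-1}}), hence R_h² ≤ B_g(v_h)·B_g(v_{h^{-1}}). -/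
noncomputable section

/-- The boundary function B_g(v) = inf_{i∈ℕ} c(ε)‖gⁱ(v) − v‖ of the parabolic
isometry g(v,t) = (Av + a, t), with c(ε) = 1/√(2cosh ε − 2). -/
def bdry {m : ℕ} (A : E m ≃ₗᵢ[ℝ] E m) (a : E m) (ε : ℝ) (v : E m) : ℝ :=
  ⨅ i : ℕ+, (1 / Real.sqrt (2 * Real.cosh ε - 2)) *
    ‖(fun u : E m => A u + a)^[(i : ℕ)] v - v‖

/-- The region T_g = {(v,t) : t > B_g(v)} of ℍⁿ. -/
def Tg {m : ℕ} (A : E m ≃ₗᵢ[ℝ] E m) (a : E m) (ε : ℝ) : Set (E m × ℝ) :=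
  {x : E m × ℝ | bdry A a ε x.1 < x.2}

/-- Key step of the discreteness criterion.  Suppose R_h > B_g(v_h) and h carries
the vertical geodesic over v_h to the one over v_{h⁻¹} via h(v_h,s) = (v_{h⁻¹}, R_h²/s).
Then h maps the vertical segment σ from N_h = (v_h,R_h) down to (v_h, B_g(v_h))
onto the vertical segment from N_{h⁻¹} = (v_{h⁻¹},R_h) up to (v_{h⁻¹}, t) with
t = R_h²/B_g(v_h); and the disjointness h(T_g) ∩ T_g = ∅ forces
t ≤ B_g(v_{h⁻¹}), hence R_h² ≤ B_g(v_h)·B_g(v_{h⁻¹}). -/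
theorem key_step_criterion {m : ℕ} (A : E m ≃ₗᵢ[ℝ] E m) (a : E m) (ha : a ≠ 0)
    (ε : ℝ) (hε : 0 < ε) (h : E m × ℝ → E m × ℝ)
    (vh vh' : E m) (R : ℝ) (hR : 0 < R)
    (hgeo : ∀ s : ℝ, 0 < s → h (vh, s) = (vh', R ^ 2 / s))
    (hBpos : 0 < bdry A a ε vh) (hRB : bdry A a ε vh < R)
    (hdisj : ∀ x ∈ Tg A a ε, h x ∉ Tg A a ε) :
    h '' {x : E m × ℝ | x.1 = vh ∧ x.2 ∈ Set.Icc (bdry A a ε vh) R}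
        = {x : E m × ℝ | x.1 = vh' ∧ x.2 ∈ Set.Icc R (R ^ 2 / bdry A a ε vh)} ∧
    R ^ 2 / bdry A a ε vh ≤ bdry A a ε vh' ∧
    R ^ 2 ≤ bdry A a ε vh * bdry A a ε vh' := by
  set B := bdry A a ε vh with hBdef
  set B' := bdry A a ε vh' with hB'def
  have hR2 : (0:ℝ) < R ^ 2 := by positivity
  have key : ∀ s : ℝ, B < s → R ^ 2 / s ≤ B' := by
    intro s hs
    have hs0 : 0 < s := hBpos.trans hs
    have hx : ((vh, s) : E m × ℝ) ∈ Tg A a ε := hs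
    have h2 := hdisj _ hx
    rw [hgeo s hs0] at h2
    simpa [Tg, not_lt, ← hB'def] using h2
  have hB'R : R ≤ B' := by
    have h3 := key R hRB
    rwa [sq, mul_div_assoc, div_self hR.ne', mul_one] at h3
  have hmul : R ^ 2 ≤ B * B' := by
    by_contra hcon
    push_neg at hcon
    have hB'0 : 0 < B' := hR.trans_le hB'R
    have h1 : B < R ^ 2 / B' := (lt_div_iff₀ hB'0).2 (by nlinarith)
    set s := (B + R ^ 2 / B') / 2 with hsdef
    have hs1 : B < s := by linarith
    have hs2 : s < R ^ 2 / B' := by linarith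
    have h4 := key s hs1
    have hs0 : 0 < s := hBpos.trans hs1
    rw [div_le_iff₀ hs0] at h4
    have h5 : s * B' < R ^ 2 := by
      calc s * B' < (R ^ 2 / B') * B' := by exact mul_lt_mul_of_pos_right hs2 hB'0
        _ = R ^ 2 := by field_simp
    linarith
  have hdiv : R ^ 2 / B ≤ B' := (div_le_iff₀ hBpos).2 (by nlinarith)
  refine ⟨?_, hdiv, hmul⟩
  ext x
  simp only [Set.mem_image, Set.mem_setOf_eq, Set.mem_Icc]
  constructor
  · rintro ⟨⟨v, s⟩, ⟨hv, hsB, hsR⟩, rfl⟩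
    simp only at hv hsB hsR
    subst hv
    have hs0 : 0 < s := hBpos.trans_le hsB
    rw [hgeo s hs0]
    refine ⟨rfl, ?_, ?_⟩
    · rw [le_div_iff₀ hs0]; nlinarith
    · rw [div_le_div_iff₀ hs0 hBpos]; nlinarith
  · rintro ⟨hv, htR, htB⟩
    obtain ⟨v, t⟩ := x
    simp only at hv htR htB
    subst hv
    have ht0 : 0 < t := hR.trans_le htR
    refine ⟨(vh, R ^ 2 / t), ⟨rfl, ?_, ?_⟩, ?_⟩
    · rw [le_div_iff₀ ht0]
      calc B * t ≤ B * (R ^ 2 / B) := by gcongr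
        _ = R ^ 2 := by field_simp
    · rw [div_le_iff₀ ht0]; nlinarith
    · rw [hgeo _ (by positivity)]
      congr 1
      field_simp
end
end

section
/- Let α be irrational and c > 0. Define u_i(r) = c·√(4 sin²(π i α) r² + i²) for i ∈ ℕ and r ≥ 0, and B(r) = inf_{i∈ℕ} u_i(r). Then B(r)/r → 0 as r → ∞. -/
noncomputable section
open Real

/-- For irrational α and c > 0, the boundary function
B(r) = inf_{i∈ℕ} c√(4 sin²(πiα) r² + i²) of the screw translation
g(r,θ,z,t) = (r, θ+2πα, z+1, t) satisfies B(r)/r → 0 as r → ∞. -/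
theorem screw_boundary_sublinear (α : ℝ) (hα : Irrational α) (c : ℝ) (hc : 0 < c) :
    Filter.Tendsto
      (fun r : ℝ =>
        (⨅ i : ℕ+, c * Real.sqrt (4 * Real.sin (π * i * α) ^ 2 * r ^ 2 + (i : ℝ) ^ 2)) / r)
      Filter.atTop (nhds 0) := by
  rw [NormedAddCommGroup.tendsto_nhds_zero]
  intro ε hε
  -- choose n with 1/(n+1) small
  have hδ : (0 : ℝ) < ε / (4 * c * π) := by positivity
  obtain ⟨n, hn⟩ := exists_nat_one_div_lt hδ
  -- Dirichlet approximation
  obtain ⟨k, hk0, hkn, hk⟩ := Real.exists_nat_abs_mul_sub_round_le α (n := n + 1) (Nat.succ_pos n)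
  set m : ℤ := round ((k : ℝ) * α) with hm
  -- bound on |sin (π k α)|
  have hsin : |Real.sin (π * k * α)| ≤ π * (1 / (n + 2)) := by
    have h1 : Real.sin (π * k * α) = (-1 : ℝ) ^ m * Real.sin (π * ((k : ℝ) * α - m)) := by
      rw [← Real.sin_add_int_mul_pi (π * ((k : ℝ) * α - m)) m]
      ring_nf
    rw [h1, abs_mul]
    have h2 : |((-1 : ℝ) ^ m)| = 1 := by
      rcases Int.even_or_odd m with he | ho
      · rw [he.neg_one_zpow]; simp
      · rw [Odd.neg_one_zpow ho]; simp
    rw [h2, one_mul]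
    calc |Real.sin (π * ((k : ℝ) * α - m))| ≤ |π * ((k : ℝ) * α - m)| :=
          Real.abs_sin_le_abs
      _ = π * |(k : ℝ) * α - m| := by rw [abs_mul, abs_of_pos Real.pi_pos]
      _ ≤ π * (1 / (n + 2)) := by
          apply mul_le_mul_of_nonneg_left _ Real.pi_pos.le
          refine hk.trans_eq ?_
          push_cast; ring
  have hsin' : |Real.sin (π * k * α)| < ε / (4 * c) := by
    have hlt : π * (1 / (n + 2)) < π * (ε / (4 * c * π)) := by
      apply mul_lt_mul_of_pos_left _ Real.pi_pos
      calc (1 : ℝ) / (n + 2) ≤ 1 / (n + 1) := by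
            apply one_div_le_one_div_of_le (by positivity) (by linarith)
        _ < ε / (4 * c * π) := hn
    have heq : π * (ε / (4 * c * π)) = ε / (4 * c) := by
      field_simp
    linarith [hsin]
  set s := |Real.sin (π * k * α)| with hs
  have hs0 : 0 ≤ s := abs_nonneg _
  -- eventually r large enough
  filter_upwards [Filter.eventually_ge_atTop (max 1 (2 * c * k / ε))] with r hr
  have hr1 : (1 : ℝ) ≤ r := le_trans (le_max_left _ _) hr
  have hr0 : (0 : ℝ) < r := lt_of_lt_of_le one_pos hr1
  have hrk : 2 * c * k / ε ≤ r := le_trans (le_max_right _ _) hr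
  set B := ⨅ i : ℕ+, c * Real.sqrt (4 * Real.sin (π * i * α) ^ 2 * r ^ 2 + (i : ℝ) ^ 2) with hB
  have hbdd : BddBelow (Set.range fun i : ℕ+ =>
      c * Real.sqrt (4 * Real.sin (π * i * α) ^ 2 * r ^ 2 + (i : ℝ) ^ 2)) := by
    refine ⟨0, fun x hx => ?_⟩
    obtain ⟨i, rfl⟩ := hx
    positivity
  have hB0 : 0 ≤ B := by
    apply le_ciInf
    intro i
    positivity
  have hkpnat : ((⟨k, hk0⟩ : ℕ+) : ℝ) = (k : ℝ) := rfl
  have hBle : B ≤ c * Real.sqrt (4 * Real.sin (π * k * α) ^ 2 * r ^ 2 + (k : ℝ) ^ 2) := by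
    have := ciInf_le hbdd (⟨k, hk0⟩ : ℕ+)
    simpa [hkpnat] using this
  -- sqrt bound
  have hsq : Real.sqrt (4 * Real.sin (π * k * α) ^ 2 * r ^ 2 + (k : ℝ) ^ 2)
      ≤ 2 * s * r + k := by
    have h1 : 4 * Real.sin (π * k * α) ^ 2 * r ^ 2 + (k : ℝ) ^ 2 ≤ (2 * s * r + k) ^ 2 := by
      have : Real.sin (π * k * α) ^ 2 = s ^ 2 := (sq_abs _).symm
      rw [this]
      nlinarith [mul_nonneg (mul_nonneg hs0 hr0.le) (Nat.cast_nonneg (α := ℝ) k)]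
    calc Real.sqrt (4 * Real.sin (π * k * α) ^ 2 * r ^ 2 + (k : ℝ) ^ 2)
        ≤ Real.sqrt ((2 * s * r + k) ^ 2) := Real.sqrt_le_sqrt h1
      _ = 2 * s * r + k := by
          rw [Real.sqrt_sq (by positivity)]
  have hfinal : B / r < ε := by
    have hB2 : B ≤ c * (2 * s * r + k) :=
      hBle.trans (mul_le_mul_of_nonneg_left hsq hc.le)
    have h3 : B / r ≤ c * (2 * s * r + k) / r := by
      gcongr
    have h4 : c * (2 * s * r + k) / r = 2 * c * s + c * k / r := by
      field_simp
    have h5 : 2 * c * s < ε / 2 := by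
      have : s < ε / (4 * c) := hsin'
      calc 2 * c * s < 2 * c * (ε / (4 * c)) := by
            apply mul_lt_mul_of_pos_left this (by positivity)
        _ = ε / 2 := by field_simp; ring
    have h6 : c * k / r ≤ ε / 2 := by
      rw [div_le_iff₀ hr0]
      have := mul_le_mul_of_nonneg_left hrk (le_of_lt (by positivity : (0:ℝ) < ε / 2))
      calc c * k = ε / 2 * (2 * c * k / ε) := by field_simp
        _ ≤ ε / 2 * r := by
            apply mul_le_mul_of_nonneg_left hrk (by positivity)
        _ = ε / 2 * r := rfl
    calc B / r ≤ 2 * c * s + c * k / r := by rw [← h4]; exact h3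
      _ < ε / 2 + ε / 2 := by
          apply add_lt_add_of_lt_of_le h5 h6
      _ = ε := by ring
  have : ‖B / r‖ = B / r := by
    rw [Real.norm_eq_abs, abs_of_nonneg (div_nonneg hB0 hr0.le)]
  rw [this]
  exact hfinal
end
end

section
/- Let α be a Diophantine irrational of exponent ν ≥ 2, i.e., there exists c₀ > 0 with dist(iα, ℤ) ≥ c₀ / i^{ν−1} for all i ∈ ℕ. Then there exist constants c₁ > 0 and r₀ such that inf_{i∈ℕ} √(4 sin²(π i α) r² + i²) ≥ c₁ · r^{1/(2ν−2)} for all r ≥ r₀. -/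
noncomputable section
open Real

lemma two_dist_le_abs_sin_pi_mul (x : ℝ) :
    2 * |x - round x| ≤ |Real.sin (π * x)| := by
  have h1 : |x - round x| ≤ 1 / 2 := abs_sub_round x
  have hπ : 0 < π := Real.pi_pos
  have key : |Real.sin (π * x)| = |Real.sin (π * (x - round x))| := by
    have hx : π * x = π * (x - round x) + (round x : ℝ) * π := by push_cast; ring
    rw [hx, Real.sin_add]
    have h0 : Real.sin ((round x : ℝ) * π) = 0 := by
      exact_mod_cast Real.sin_int_mul_pi (round x)
    rw [h0, mul_zero, add_zero, abs_mul]
    have hc : |Real.cos ((round x : ℝ) * π)| = 1 := by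
      have h2 := Real.sin_sq_add_cos_sq ((round x : ℝ) * π)
      rw [h0] at h2
      nlinarith [abs_nonneg (Real.cos ((round x : ℝ) * π)),
        sq_abs (Real.cos ((round x : ℝ) * π))]
    rw [hc, mul_one]
  rw [key]
  have habs : |π * (x - round x)| ≤ π / 2 := by
    rw [abs_mul, abs_of_pos hπ]; nlinarith
  have h3 := Real.mul_abs_le_abs_sin habs
  rw [abs_mul, abs_of_pos hπ] at h3
  calc 2 * |x - round x| = 2 / π * (π * |x - round x|) := by field_simp
    _ ≤ _ := h3

/-- Diophantine lower bound: if α is Diophantine of exponent ν ≥ 2, i.e.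
dist(iα, ℤ) ≥ c₀/i^{ν−1} for all i ∈ ℕ, then there are c₁ > 0 and r₀ with
inf_{i∈ℕ} √(4 sin²(πiα) r² + i²) ≥ c₁ r^{1/(2ν−2)} for all r ≥ r₀. -/
theorem screw_boundary_diophantine_lower_bound (α : ℝ) (hα : Irrational α)
    (ν : ℝ) (hν : 2 ≤ ν) (c₀ : ℝ) (hc₀ : 0 < c₀)
    (hdio : ∀ i : ℕ+, c₀ / (i : ℝ) ^ (ν - 1) ≤ |(i : ℝ) * α - round ((i : ℝ) * α)|) :
    ∃ c₁ : ℝ, 0 < c₁ ∧ ∃ r₀ : ℝ, ∀ r : ℝ, r₀ ≤ r →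
      c₁ * r ^ (1 / (2 * ν - 2)) ≤
        ⨅ i : ℕ+, Real.sqrt (4 * Real.sin (π * i * α) ^ 2 * r ^ 2 + (i : ℝ) ^ 2) := by
  have hν2 : (0:ℝ) < 2 * ν - 2 := by linarith
  have hν1 : (0:ℝ) ≤ ν - 1 := by linarith
  set e : ℝ := 1 / (2 * ν - 2) with he
  have he_pos : 0 < e := by positivity
  have he_half : e ≤ 1 / 2 := by
    rw [he, div_le_div_iff₀ hν2 (by norm_num)]; linarith
  refine ⟨min 1 (2 * c₀), lt_min one_pos (by linarith), 1, fun r hr => ?_⟩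
  have hr0 : (0:ℝ) < r := lt_of_lt_of_le one_pos hr
  have hre_nonneg : 0 ≤ r ^ e := Real.rpow_nonneg hr0.le e
  have hc₁_nonneg : (0:ℝ) ≤ min 1 (2 * c₀) := le_min zero_le_one (by linarith)
  apply le_ciInf
  intro i
  have hi1 : (1:ℝ) ≤ (i:ℝ) := by exact_mod_cast i.one_le
  have hi0 : (0:ℝ) < (i:ℝ) := by linarith
  rcases le_total ((i:ℝ)) (r ^ e) with hcase | hcase
  · -- small i : use sine term
    have hpow : (i:ℝ) ^ (ν - 1) ≤ r ^ ((1:ℝ)/2) := by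
      calc (i:ℝ) ^ (ν - 1) ≤ (r ^ e) ^ (ν - 1) :=
            Real.rpow_le_rpow hi0.le hcase hν1
        _ = r ^ (e * (ν - 1)) := (Real.rpow_mul hr0.le _ _).symm
        _ = r ^ ((1:ℝ)/2) := by
            congr 1
            have hne1 : ν - 1 ≠ 0 := by intro h; linarith
            have hne2 : 2 * ν - 2 ≠ 0 := hν2.ne'
            rw [he]; field_simp <;> ring
    have hsin : 2 * c₀ / (i:ℝ) ^ (ν - 1) ≤ 2 * |Real.sin (π * i * α)| := by
      have hd := hdio i
      have hs := two_dist_le_abs_sin_pi_mul ((i:ℝ) * α)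
      have : π * (i:ℝ) * α = π * ((i:ℝ) * α) := by ring
      rw [this]
      calc 2 * c₀ / (i:ℝ) ^ (ν - 1) = 2 * (c₀ / (i:ℝ) ^ (ν - 1)) := by ring
        _ ≤ 2 * |(i:ℝ) * α - round ((i:ℝ) * α)| := by linarith
        _ ≤ 2 * |Real.sin (π * ((i:ℝ) * α))| := by
            have := abs_nonneg (Real.sin (π * ((i:ℝ) * α))); linarith
    have hsin_nonneg : 0 ≤ 2 * |Real.sin (π * i * α)| := by positivity
    have hipow_pos : (0:ℝ) < (i:ℝ) ^ (ν - 1) := Real.rpow_pos_of_pos hi0 _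
    have hrhalf_pos : (0:ℝ) < r ^ ((1:ℝ)/2) := Real.rpow_pos_of_pos hr0 _
    -- 2|sin| * r ≥ 2 c₀ r / i^{ν-1} ≥ 2 c₀ r^{1/2} ≥ 2 c₀ r^e
    have hstep : 2 * c₀ * r ^ e ≤ 2 * |Real.sin (π * i * α)| * r := by
      calc 2 * c₀ * r ^ e ≤ 2 * c₀ * r ^ ((1:ℝ)/2) := by
            have := Real.rpow_le_rpow_of_exponent_le hr he_half
            nlinarith
        _ = 2 * c₀ * r / r ^ ((1:ℝ)/2) := by
            have hrr : r ^ ((1:ℝ)/2) * r ^ ((1:ℝ)/2) = r := by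
              rw [← Real.rpow_add hr0]; norm_num
            rw [eq_div_iff hrhalf_pos.ne', mul_assoc, hrr]
        _ ≤ 2 * c₀ * r / (i:ℝ) ^ (ν - 1) := by
            apply div_le_div_of_nonneg_left _ hipow_pos hpow
            positivity
        _ = 2 * c₀ / (i:ℝ) ^ (ν - 1) * r := by ring
        _ ≤ 2 * |Real.sin (π * i * α)| * r := by nlinarith
    have hsq : (min 1 (2 * c₀) * r ^ e) ^ 2 ≤
        4 * Real.sin (π * i * α) ^ 2 * r ^ 2 + (i:ℝ) ^ 2 := by
      have h4 : (2 * |Real.sin (π * i * α)| * r) ^ 2 = 4 * Real.sin (π * i * α) ^ 2 * r ^ 2 := by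
        rw [mul_pow, mul_pow, sq_abs]; ring
      have hb : min 1 (2 * c₀) * r ^ e ≤ 2 * |Real.sin (π * i * α)| * r := by
        calc min 1 (2 * c₀) * r ^ e ≤ 2 * c₀ * r ^ e := by
              have := min_le_right 1 (2 * c₀); nlinarith
          _ ≤ _ := hstep
      nlinarith [mul_nonneg hc₁_nonneg hre_nonneg, sq_nonneg ((i:ℝ))]
    exact (Real.le_sqrt (by positivity) (by positivity)).mpr hsq
  · -- large i : use i term
    have hb : min 1 (2 * c₀) * r ^ e ≤ (i:ℝ) := by
      calc min 1 (2 * c₀) * r ^ e ≤ 1 * r ^ e := by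
            have := min_le_left 1 (2 * c₀); nlinarith
        _ = r ^ e := one_mul _
        _ ≤ (i:ℝ) := hcase
    calc min 1 (2 * c₀) * r ^ e ≤ (i:ℝ) := hb
      _ = Real.sqrt ((i:ℝ) ^ 2) := (Real.sqrt_sq hi0.le).symm
      _ ≤ _ := Real.sqrt_le_sqrt (by nlinarith [sq_nonneg (Real.sin (π * i * α) * r)])
end
end
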